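/- arXiv:1509.04327 — 3 statements merged into one kernel-verified Lean document; each statement's English description precedes it below -/
import Mathlib

section
/- If L is a list assignment on the complete graph K_n with |L(v)| = k ≥ n for every vertex v, then the number of equivalence classes of distinguishing L-colorings of K_n is at least C(k, n). -/
def IsDistinguishing {V α : Type*} (G : SimpleGraph V) (c : V → α) : Prop :=
  ∀ φ : G ≃g G, (∀ v, c (φ v) = c v) → ∀ v, φ v = v

noncomputable def distNumber {V : Type*} (G : SimpleGraph V) : ℕ :=
  sInf {k | ∃ c : V → Fin k, IsDistinguishing G c}

noncomputable def listDistNumber {V : Type*} (G : SimpleGraph V) : ℕ :=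
  sInf {k | ∀ L : V → Finset ℕ, (∀ v, (L v).card = k) →
    ∃ c : V → ℕ, (∀ v, c v ∈ L v) ∧ IsDistinguishing G c}

def colorSetoid {V α : Type*} (G : SimpleGraph V) (P : (V → α) → Prop) :
    Setoid {c : V → α // P c} where
  r c c' := ∃ φ : G ≃g G, ∀ v, c.1 v = c'.1 (φ v)
  iseqv := by
    refine ⟨fun c => ⟨SimpleGraph.Iso.refl, fun v => rfl⟩, ?_, ?_⟩
    · rintro c c' ⟨φ, h⟩
      exact ⟨φ.symm, fun v => by rw [h (φ.symm v), RelIso.apply_symm_apply]⟩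
    · rintro c c' c'' ⟨φ, h⟩ ⟨ψ, h'⟩
      exact ⟨φ.trans ψ, fun v => by rw [h v, h' (φ v)]; rfl⟩

noncomputable def numDistClasses {V : Type*} (G : SimpleGraph V) (k : ℕ) : ℕ :=
  Nat.card (Quotient (colorSetoid (α := Fin k) G (fun c => IsDistinguishing G c)))

noncomputable def numDistListClasses {V : Type*} (G : SimpleGraph V) (L : V → Finset ℕ) : ℕ :=
  Nat.card (Quotient (colorSetoid (α := ℕ) G
    (fun c => (∀ v, c v ∈ L v) ∧ IsDistinguishing G c)))

lemma transversal_card : ∀ (n m : ℕ) (L : Fin n → Finset ℕ), (∀ v, m ≤ (L v).card) →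
    m.descFactorial n ≤ ((Fintype.piFinset L).filter (fun c => Function.Injective c)).card
  | 0, m, L, _ => by
    rw [Nat.descFactorial_zero]
    refine Finset.card_pos.mpr ⟨Fin.elim0, ?_⟩
    simp only [Finset.mem_filter, Fintype.mem_piFinset]
    exact ⟨fun i => i.elim0, fun a => a.elim0⟩
  | n+1, 0, L, _ => by simp
  | n+1, m+1, L, hL => by
    classical
    set consF : ℕ → (Fin n → ℕ) → Fin (n+1) → ℕ := fun a c => Fin.cons a c with hconsF
    set L' : ℕ → Fin n → Finset ℕ := fun a v => (L v.succ).erase a with hL'def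
    have hL' : ∀ a v, m ≤ ((L' a) v).card := by
      intro a v
      show m ≤ ((L v.succ).erase a).card
      have h1 := hL v.succ
      have h2 := Finset.pred_card_le_card_erase (s := L v.succ) (a := a)
      omega
    set S : Finset (Fin (n+1) → ℕ) := (L 0).biUnion (fun a =>
      ((Fintype.piFinset (L' a)).filter (fun c => Function.Injective c)).image
        (consF a)) with hS
    have hsub : S ⊆ (Fintype.piFinset L).filter (fun c => Function.Injective c) := by
      intro c hc
      simp only [hS, Finset.mem_biUnion, Finset.mem_image, Finset.mem_filter,
        Fintype.mem_piFinset] at hc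
      obtain ⟨a, ha, c', ⟨hc'mem, hc'inj⟩, rfl⟩ := hc
      have hnr : a ∉ Set.range c' := by
        rintro ⟨j, rfl⟩
        exact (Finset.ne_of_mem_erase (hc'mem j)) rfl
      refine Finset.mem_filter.mpr ⟨Fintype.mem_piFinset.mpr ?_, ?_⟩
      · intro i
        refine Fin.cases ?_ ?_ i
        · simpa [hconsF] using ha
        · intro j
          simpa [hconsF] using Finset.mem_of_mem_erase (hc'mem j)
      · exact Fin.cons_injective_iff.mpr ⟨hnr, hc'inj⟩
    have hdisj : ∀ a ∈ L 0, ∀ b ∈ L 0, a ≠ b →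
        Disjoint (((Fintype.piFinset (L' a)).filter (fun c => Function.Injective c)).image
            (consF a))
          (((Fintype.piFinset (L' b)).filter (fun c => Function.Injective c)).image
            (consF b)) := by
      intro a _ b _ hab
      rw [Finset.disjoint_left]
      intro c hca hcb
      obtain ⟨c1, _, rfl⟩ := Finset.mem_image.mp hca
      obtain ⟨c2, _, h2⟩ := Finset.mem_image.mp hcb
      apply hab
      have := congrFun h2 0
      simpa [hconsF] using this.symm
    calc (m+1).descFactorial (n+1) = (m+1) * m.descFactorial n := by
          rw [Nat.succ_descFactorial_succ]
      _ ≤ (L 0).card * m.descFactorial n := by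
          exact Nat.mul_le_mul_right _ (hL 0)
      _ = ∑ _a ∈ L 0, m.descFactorial n := by rw [Finset.sum_const, smul_eq_mul]
      _ ≤ ∑ a ∈ L 0, (((Fintype.piFinset (L' a)).filter
            (fun c => Function.Injective c)).image (consF a)).card := by
          refine Finset.sum_le_sum fun a _ => ?_
          have hinj : Function.Injective (consF a) := by
            intro c1 c2 h
            funext i
            have := congrFun h i.succ
            simpa [hconsF] using this
          rw [Finset.card_image_of_injective _ hinj]
          exact transversal_card n m (L' a) (hL' a)
      _ = S.card := (Finset.card_biUnion hdisj).symm
      _ ≤ _ := Finset.card_le_card hsub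

/-- If `L` is a list assignment on `K_n` with all lists of size `k ≥ n`, then the number
of equivalence classes of distinguishing `L`-colorings of `K_n` is at least `C(k, n)`. -/
theorem numDistListClasses_top_ge (n k : ℕ) (hkn : n ≤ k) (L : Fin n → Finset ℕ)
    (hL : ∀ v, (L v).card = k) :
    k.choose n ≤ numDistListClasses (⊤ : SimpleGraph (Fin n)) L := by
  classical
  set T := (Fintype.piFinset L).filter (fun c => Function.Injective c) with hT
  have h1 : k.descFactorial n ≤ T.card := transversal_card n k L (fun v => (hL v).ge)
  set img : (Fin n → ℕ) → Finset ℕ := fun c => Finset.image c Finset.univ with himg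
  -- fiber bound : each image-set has at most n! preimages in T
  have h2 : T.card ≤ n.factorial * (T.image img).card := by
    apply Finset.card_le_mul_card_image
    intro Sfin hSfin
    obtain ⟨c₀, hc₀T, hc₀S⟩ := Finset.mem_image.mp hSfin
    have hc₀inj : Function.Injective c₀ := (Finset.mem_filter.mp hc₀T).2
    have hmain : ∀ c ∈ T.filter (fun x => img x = Sfin),
        ∃ σ : Equiv.Perm (Fin n), c = c₀ ∘ σ := by
      intro c hc
      obtain ⟨hcT, hcS⟩ := Finset.mem_filter.mp hc
      have hcinj : Function.Injective c := (Finset.mem_filter.mp hcT).2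
      have hrange : Set.range c = Set.range c₀ := by
        have : (img c : Set ℕ) = (img c₀ : Set ℕ) := by rw [hcS, hc₀S]
        simpa [himg, Set.image_univ] using this
      refine ⟨(Equiv.ofInjective c hcinj).trans ((Equiv.setCongr hrange).trans
        (Equiv.ofInjective c₀ hc₀inj).symm), funext fun i => ?_⟩
      have h3 := Equiv.apply_ofInjective_symm hc₀inj
        ((Equiv.setCongr hrange) ((Equiv.ofInjective c hcinj) i))
      simpa using h3.symm
    calc (T.filter fun x => img x = Sfin).card
        ≤ (Finset.univ : Finset (Equiv.Perm (Fin n))).card := by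
          refine Finset.card_le_card_of_injOn
            (fun c => if h : ∃ σ : Equiv.Perm (Fin n), c = c₀ ∘ σ then h.choose else 1)
            (fun _ _ => Finset.mem_univ _) ?_
          intro c1 hc1 c2 hc2 heq
          have e1 := hmain c1 hc1
          have e2 := hmain c2 hc2
          simp only [dif_pos e1, dif_pos e2] at heq
          rw [e1.choose_spec, e2.choose_spec, heq]
      _ = n.factorial := by simp [Finset.card_univ, Fintype.card_perm]
  -- the quotient
  set P : (Fin n → ℕ) → Prop :=
    fun c => (∀ v, c v ∈ L v) ∧ IsDistinguishing (⊤ : SimpleGraph (Fin n)) c with hP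
  have hfin : Finite {c : Fin n → ℕ // P c} := by
    have hf1 : Finite {c : Fin n → ℕ // ∀ v, c v ∈ L v} := by
      refine Finite.of_injective
        (fun c => (fun v => (⟨c.1 v, c.2 v⟩ : (L v : Finset ℕ)))) ?_
      intro a b h
      exact Subtype.ext (funext fun v => congrArg Subtype.val (congrFun h v))
    refine Finite.of_injective
      (fun c => (⟨c.1, c.2.1⟩ : {c : Fin n → ℕ // ∀ v, c v ∈ L v})) ?_
    intro a b hab
    simp only [Subtype.mk.injEq] at hab
    exact Subtype.ext hab
  have hfinQ : Finite (Quotient (colorSetoid (α := ℕ) (⊤ : SimpleGraph (Fin n)) P)) :=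
    Quotient.finite _
  have : Fintype (Quotient (colorSetoid (α := ℕ) (⊤ : SimpleGraph (Fin n)) P)) :=
    Fintype.ofFinite _
  set h : Quotient (colorSetoid (α := ℕ) (⊤ : SimpleGraph (Fin n)) P) → Finset ℕ :=
    Quotient.lift (fun c => img c.1) (by
      rintro ⟨c, hc⟩ ⟨c', hc'⟩ ⟨φ, hφ⟩
      show img c = img c'
      simp only at hφ
      ext x
      simp only [himg, Finset.mem_image, Finset.mem_univ, true_and]
      constructor
      · rintro ⟨v, rfl⟩
        exact ⟨φ v, (hφ v).symm⟩
      · rintro ⟨w, rfl⟩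
        refine ⟨φ.symm w, ?_⟩
        rw [hφ (φ.symm w)]
        congr 1
        exact φ.apply_symm_apply w) with hh
  have h3 : (T.image img) ⊆ Finset.image h Finset.univ := by
    intro Sfin hSfin
    obtain ⟨c, hcT, rfl⟩ := Finset.mem_image.mp hSfin
    obtain ⟨hcmem, hcinj⟩ := Finset.mem_filter.mp hcT
    have hPc : P c := by
      refine ⟨fun v => Fintype.mem_piFinset.mp hcmem v, ?_⟩
      intro φ hφ v
      exact hcinj (hφ v)
    exact Finset.mem_image.mpr ⟨⟦⟨c, hPc⟩⟧, Finset.mem_univ _, rfl⟩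
  have h4 : (T.image img).card ≤
      numDistListClasses (⊤ : SimpleGraph (Fin n)) L := by
    calc (T.image img).card ≤ (Finset.image h Finset.univ).card :=
          Finset.card_le_card h3
      _ ≤ Finset.univ.card := Finset.card_image_le
      _ = Nat.card (Quotient (colorSetoid (α := ℕ) (⊤ : SimpleGraph (Fin n)) P)) := by
          rw [Finset.card_univ, Nat.card_eq_fintype_card]
      _ = numDistListClasses (⊤ : SimpleGraph (Fin n)) L := rfl
  have h5 : n.factorial * k.choose n ≤
      n.factorial * numDistListClasses (⊤ : SimpleGraph (Fin n)) L := by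
    calc n.factorial * k.choose n = k.descFactorial n :=
          (Nat.descFactorial_eq_factorial_mul_choose k n).symm
      _ ≤ T.card := h1
      _ ≤ n.factorial * (T.image img).card := h2
      _ ≤ _ := Nat.mul_le_mul_left _ h4
  exact Nat.le_of_mul_le_mul_left h5 n.factorial_pos
end

section
/- A graph G is an interval graph if and only if there exists a linear ordering of the maximal cliques of G such that for every vertex v, the maximal cliques containing v appear consecutively in the ordering. -/
/-- `G` is an interval graph: the vertices can be assigned closed real intervals so that
two distinct vertices are adjacent iff their intervals intersect. -/
def IsIntervalGraph {V : Type*} (G : SimpleGraph V) : Prop :=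
  ∃ a b : V → ℝ, ∀ u v : V,
    G.Adj u v ↔ u ≠ v ∧ (Set.Icc (a u) (b u) ∩ Set.Icc (a v) (b v)).Nonempty

/-- `s` is a maximal clique of `G`. -/
def IsMaximalClique {V : Type*} (G : SimpleGraph V) (s : Set V) : Prop :=
  G.IsClique s ∧ ∀ t : Set V, G.IsClique t → s ⊆ t → s = t

theorem exists_maximal_clique_superset {V : Type*} [Fintype V] (G : SimpleGraph V)
    (s : Set V) (hs : G.IsClique s) : ∃ t, IsMaximalClique G t ∧ s ⊆ t := by
  classical
  have hfin : {t : Set V | G.IsClique t ∧ s ⊆ t}.Finite := Set.toFinite _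
  obtain ⟨t, ht, hmax⟩ := Set.Finite.exists_maximalFor id _ hfin ⟨s, hs, subset_rfl⟩
  refine ⟨t, ⟨ht.1, fun t' ht' hsub => ?_⟩, ht.2⟩
  exact subset_antisymm hsub (hmax ⟨ht', ht.2.trans hsub⟩ hsub)

theorem clique_helly {V : Type*} [Fintype V] {G : SimpleGraph V} {a b : V → ℝ}
    (hab : ∀ v, a v ≤ b v)
    (hiff : ∀ u v, G.Adj u v ↔ u ≠ v ∧ (Set.Icc (a u) (b u) ∩ Set.Icc (a v) (b v)).Nonempty)
    {s : Set V} (hs : G.IsClique s) :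
    ∃ x, ∀ v ∈ s, x ∈ Set.Icc (a v) (b v) := by
  classical
  rcases s.eq_empty_or_nonempty with rfl | ⟨w, hw⟩
  · exact ⟨0, by simp⟩
  · have hfs : s.toFinset.Nonempty := ⟨w, Set.mem_toFinset.mpr hw⟩
    refine ⟨s.toFinset.sup' hfs a, fun v hv => ⟨Finset.le_sup' a (Set.mem_toFinset.mpr hv), ?_⟩⟩
    obtain ⟨u, hu, hequ⟩ := Finset.exists_mem_eq_sup' hfs a
    rw [hequ]
    by_cases huv : u = v
    · subst huv; exact hab u
    · have hadj := hs (Set.mem_toFinset.mp hu) hv huv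
      obtain ⟨-, y, hy1, hy2⟩ := (hiff u v).mp hadj
      exact hy1.1.trans hy2.2

theorem exists_nice_rep {V : Type*} [Fintype V] {G : SimpleGraph V} (h : IsIntervalGraph G) :
    ∃ a b : V → ℝ, (∀ v, a v ≤ b v) ∧ ∀ u v, G.Adj u v ↔ u ≠ v ∧
      (Set.Icc (a u) (b u) ∩ Set.Icc (a v) (b v)).Nonempty := by
  classical
  obtain ⟨a, b, hab⟩ := h
  rcases isEmpty_or_nonempty V with hV | hV
  · exact ⟨fun _ => 0, fun _ => 0, fun v => isEmptyElim v, fun u => isEmptyElim u⟩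
  · set L : ℝ := Finset.univ.inf' Finset.univ_nonempty a with hL
    have hLle : ∀ v : V, L ≤ a v := fun v => Finset.inf'_le a (Finset.mem_univ v)
    set c : V → ℝ := fun v => L - 1 - Real.exp ((Fintype.equivFin V v : ℕ) : ℝ) with hc
    have hclt : ∀ v w : V, c v < a w := by
      intro v w
      have h1 : (0:ℝ) < Real.exp ((Fintype.equivFin V v : ℕ) : ℝ) := Real.exp_pos _
      have := hLle w
      simp only [hc]
      linarith
    have hcinj : Function.Injective c := by
      intro v w hvw
      have : Real.exp ((Fintype.equivFin V v : ℕ) : ℝ) = Real.exp ((Fintype.equivFin V w : ℕ) : ℝ) := by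
        simp only [hc] at hvw; linarith
      have h2 := Real.exp_injective this
      have h3 : ((Fintype.equivFin V v : ℕ) : ℕ) = ((Fintype.equivFin V w : ℕ) : ℕ) :=
        Nat.cast_injective h2
      exact (Fintype.equivFin V).injective (Fin.val_injective h3)
    refine ⟨fun v => if a v ≤ b v then a v else c v, fun v => if a v ≤ b v then b v else c v,
      fun v => ?_, fun u v => ?_⟩
    · by_cases hv : a v ≤ b v <;> simp [hv]
    · by_cases hu : a u ≤ b u <;> by_cases hv : a v ≤ b v
      · simp only [if_pos hu, if_pos hv]; exact hab u v
      · simp only [if_pos hu, if_neg hv]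
        constructor
        · intro hadj
          obtain ⟨-, y, -, hy2⟩ := (hab u v).mp hadj
          exact absurd (hy2.1.trans hy2.2) hv
        · rintro ⟨hne, x, hx1, hx2⟩
          have hxc : x = c v := le_antisymm hx2.2 hx2.1
          exact absurd (hxc ▸ hx1.1 : a u ≤ c v) (not_le.mpr (hclt v u))
      · simp only [if_neg hu, if_pos hv]
        constructor
        · intro hadj
          obtain ⟨-, y, hy1, -⟩ := (hab u v).mp hadj
          exact absurd (hy1.1.trans hy1.2) hu
        · rintro ⟨hne, x, hx1, hx2⟩
          have hxc : x = c u := le_antisymm hx1.2 hx1.1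
          exact absurd (hxc ▸ hx2.1 : a v ≤ c u) (not_le.mpr (hclt u v))
      · simp only [if_neg hu, if_neg hv]
        constructor
        · intro hadj
          obtain ⟨-, y, hy1, -⟩ := (hab u v).mp hadj
          exact absurd (hy1.1.trans hy1.2) hu
        · rintro ⟨hne, x, hx1, hx2⟩
          have h1 : x = c u := le_antisymm hx1.2 hx1.1
          have h2 : x = c v := le_antisymm hx2.2 hx2.1
          exact absurd (hcinj (h1 ▸ h2)) hne

theorem exists_monotone_equiv {K : Type*} [Fintype K] (p : K → ℝ)
    (hpinj : Function.Injective p) :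
    ∃ (m : ℕ) (f : Fin m ≃ K), ∀ i j : Fin m, i ≤ j → p (f i) ≤ p (f j) := by
  letI : LinearOrder K := LinearOrder.lift' p hpinj
  have hmono : ∀ x y : K, x ≤ y → p x ≤ p y := fun x y hxy => hxy
  exact ⟨Fintype.card K, (monoEquivOfFin K rfl).toEquiv,
    fun i j hij => hmono _ _ ((monoEquivOfFin K rfl).le_iff_le.mpr hij)⟩

/-- Fulkerson–Gross: a finite graph is an interval graph iff its maximal cliques can be
linearly ordered so that the maximal cliques containing any given vertex are consecutive. -/
theorem isIntervalGraph_iff_consecutive_cliques {V : Type*} [Fintype V] (G : SimpleGraph V) :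
    IsIntervalGraph G ↔
      ∃ (m : ℕ) (f : Fin m ≃ {s : Set V // IsMaximalClique G s}),
        ∀ (v : V) (i j l : Fin m), i ≤ j → j ≤ l →
          v ∈ (f i).1 → v ∈ (f l).1 → v ∈ (f j).1 := by
  classical
  constructor
  · intro h
    obtain ⟨a, b, hab, hiff⟩ := exists_nice_rep h
    letI : Fintype {s : Set V // IsMaximalClique G s} := Fintype.ofFinite _
    choose p hp using fun s : {s : Set V // IsMaximalClique G s} => clique_helly hab hiff s.2.1
    have hpinj : Function.Injective p := by
      intro s t hst
      have hclique : G.IsClique (s.1 ∪ t.1) := by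
        intro u hu v hv huv
        refine (hiff u v).mpr ⟨huv, p s, ?_, ?_⟩
        · rcases hu with hu | hu
          · exact hp s u hu
          · exact hst ▸ hp t u hu
        · rcases hv with hv | hv
          · exact hp s v hv
          · exact hst ▸ hp t v hv
      have h1 := s.2.2 _ hclique Set.subset_union_left
      have h2 := t.2.2 _ hclique Set.subset_union_right
      exact Subtype.ext (h1.trans h2.symm)
    obtain ⟨m, f, hmono⟩ := exists_monotone_equiv p hpinj
    refine ⟨m, f, ?_⟩
    intro v i j l hij hjl hvi hvl
    have h1 : p (f i) ≤ p (f j) := hmono _ _ hij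
    have h2 : p (f j) ≤ p (f l) := hmono _ _ hjl
    have hvij := hp (f i) v hvi
    have hvlj := hp (f l) v hvl
    have hpj : p (f j) ∈ Set.Icc (a v) (b v) :=
      ⟨hvij.1.trans h1, h2.trans hvlj.2⟩
    have hall : ∀ z ∈ insert v (f j).1, p (f j) ∈ Set.Icc (a z) (b z) := by
      intro z hz
      rcases Set.mem_insert_iff.mp hz with rfl | hz
      · exact hpj
      · exact hp (f j) z hz
    have hclique : G.IsClique (insert v (f j).1) := by
      intro x hx y hy hxy
      exact (hiff x y).mpr ⟨hxy, p (f j), hall x hx, hall y hy⟩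
    have := (f j).2.2 _ hclique (Set.subset_insert _ _)
    rw [this]
    exact Set.mem_insert v _
  · rintro ⟨m, f, hcons⟩
    set S : V → Finset (Fin m) := fun v => Finset.univ.filter fun i => v ∈ (f i).1 with hS
    have hmemS : ∀ (v : V) (i : Fin m), i ∈ S v ↔ v ∈ (f i).1 := by
      intro v i; simp [hS]
    have hSne : ∀ v, (S v).Nonempty := by
      intro v
      obtain ⟨t, ht, hvt⟩ := exists_maximal_clique_superset G {v}
        (Set.pairwise_singleton v G.Adj)
      refine ⟨f.symm ⟨t, ht⟩, (hmemS v _).mpr ?_⟩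
      rw [f.apply_symm_apply]
      exact hvt rfl
    refine ⟨fun v => (((S v).min' (hSne v) : Fin m) : ℕ),
      fun v => (((S v).max' (hSne v) : Fin m) : ℕ), fun u v => ?_⟩
    constructor
    · intro hadj
      refine ⟨hadj.ne, ?_⟩
      have hpair : G.IsClique {u, v} := by
        intro x hx y hy hxy
        rcases hx with rfl | hx <;> rcases hy with rfl | hy
        · exact absurd rfl hxy
        · rw [Set.mem_singleton_iff] at hy; subst hy; exact hadj
        · rw [Set.mem_singleton_iff] at hx; subst hx; exact hadj.symm
        · rw [Set.mem_singleton_iff] at hx hy; subst hx; subst hy; exact absurd rfl hxy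
      obtain ⟨t, ht, hsub⟩ := exists_maximal_clique_superset G _ hpair
      set k := f.symm ⟨t, ht⟩ with hk
      have hku : k ∈ S u := (hmemS u k).mpr (by rw [hk, f.apply_symm_apply]; exact hsub (by simp))
      have hkv : k ∈ S v := (hmemS v k).mpr (by rw [hk, f.apply_symm_apply]; exact hsub (by simp))
      refine ⟨((k : ℕ) : ℝ), ⟨?_, ?_⟩, ⟨?_, ?_⟩⟩
      · exact Nat.cast_le.mpr (Finset.min'_le _ _ hku)
      · exact Nat.cast_le.mpr (Finset.le_max' _ _ hku)
      · exact Nat.cast_le.mpr (Finset.min'_le _ _ hkv)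
      · exact Nat.cast_le.mpr (Finset.le_max' _ _ hkv)
    · rintro ⟨hne, x, hxu, hxv⟩
      set iu := (S u).min' (hSne u) with hiu
      set ju := (S u).max' (hSne u) with hju
      set iv := (S v).min' (hSne v) with hiv
      set jv := (S v).max' (hSne v) with hjv
      have hivju : iv ≤ ju := by
        have : ((iv : ℕ) : ℝ) ≤ ((ju : ℕ) : ℝ) := hxv.1.trans hxu.2
        exact Fin.le_def.mpr (Nat.cast_le.mp this)
      have hiujv : iu ≤ jv := by
        have : ((iu : ℕ) : ℝ) ≤ ((jv : ℕ) : ℝ) := hxu.1.trans hxv.2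
        exact Fin.le_def.mpr (Nat.cast_le.mp this)
      have hiuju : iu ≤ ju := Finset.min'_le _ _ (Finset.max'_mem _ _)
      have hivjv : iv ≤ jv := Finset.min'_le _ _ (Finset.max'_mem _ _)
      set k := max iu iv with hkdef
      have hu1 : u ∈ (f iu).1 := (hmemS u iu).mp (Finset.min'_mem _ _)
      have hu2 : u ∈ (f ju).1 := (hmemS u ju).mp (Finset.max'_mem _ _)
      have hv1 : v ∈ (f iv).1 := (hmemS v iv).mp (Finset.min'_mem _ _)
      have hv2 : v ∈ (f jv).1 := (hmemS v jv).mp (Finset.max'_mem _ _)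
      have hku : u ∈ (f k).1 :=
        hcons u iu k ju (le_max_left _ _) (max_le hiuju hivju) hu1 hu2
      have hkv : v ∈ (f k).1 :=
        hcons v iv k jv (le_max_right _ _) (max_le hiujv hivjv) hv1 hv2
      exact (f k).2.1 hku hkv hne
end

section
/- If G is the disjoint union of m pairwise isomorphic copies of a connected graph H, then the number of equivalence classes of distinguishing k-colorings of G equals C(D(H; k), m). -/
/-- The disjoint union of `m` copies of the graph `H`, on vertex set `Fin m × W`. -/
def copies {W : Type*} (H : SimpleGraph W) (m : ℕ) : SimpleGraph (Fin m × W) where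
  Adj x y := x.1 = y.1 ∧ H.Adj x.2 y.2
  symm := by constructor; rintro ⟨i, u⟩ ⟨j, v⟩ ⟨h1, h2⟩; exact ⟨h1.symm, h2.symm⟩
  loopless := by constructor; rintro ⟨i, u⟩ ⟨-, h⟩; exact H.irrefl h

section Aux

variable {W : Type*} {H : SimpleGraph W} {m k : ℕ}

private lemma comp_const (hH : H.Connected) (φ : copies H m ≃g copies H m)
    (i : Fin m) (u v : W) : (φ (i, u)).1 = (φ (i, v)).1 := by
  have h : H.Reachable u v := hH u v
  rw [SimpleGraph.reachable_iff_reflTransGen] at h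
  induction h with
  | refl => rfl
  | @tail b c' _ hadj ih =>
    have : (copies H m).Adj (φ (i, b)) (φ (i, c')) := φ.map_rel_iff.mpr ⟨rfl, hadj⟩
    exact ih.trans this.1

private def mkAuto (σ : Equiv.Perm (Fin m)) (ψ : Fin m → (H ≃g H)) :
    copies H m ≃g copies H m where
  toFun x := (σ x.1, ψ x.1 x.2)
  invFun x := (σ.symm x.1, (ψ (σ.symm x.1)).symm x.2)
  left_inv := by rintro ⟨i, w⟩; simp
  right_inv := by rintro ⟨i, w⟩; simp
  map_rel_iff' := by
    rintro ⟨i, u⟩ ⟨j, v⟩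
    show (copies H m).Adj (σ i, ψ i u) (σ j, ψ j v) ↔ (copies H m).Adj (i, u) (j, v)
    constructor
    · rintro ⟨h1, h2⟩
      obtain rfl : i = j := σ.injective h1
      exact ⟨rfl, (ψ i).map_rel_iff.mp h2⟩
    · rintro ⟨h1, h2⟩
      obtain rfl : i = j := h1
      exact ⟨rfl, (ψ i).map_rel_iff.mpr h2⟩

@[simp] private lemma mkAuto_apply (σ : Equiv.Perm (Fin m)) (ψ : Fin m → (H ≃g H))
    (i : Fin m) (w : W) : mkAuto σ ψ (i, w) = (σ i, ψ i w) := rfl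

private lemma decomp (hH : H.Connected) (φ : copies H m ≃g copies H m) :
    ∃ (σ : Equiv.Perm (Fin m)) (ψ : Fin m → (H ≃g H)),
      ∀ i w, φ (i, w) = (σ i, ψ i w) := by
  obtain ⟨w₀⟩ := hH.nonempty
  have hsymm : ∀ (j : Fin m) (u v : W), (φ.symm (j, u)).1 = (φ.symm (j, v)).1 :=
    comp_const hH φ.symm
  refine ⟨⟨fun i => (φ (i, w₀)).1, fun j => (φ.symm (j, w₀)).1, ?_, ?_⟩, ?_, ?_⟩
  · intro i
    have h1 : (φ.symm ((φ (i, w₀)).1, w₀)).1 = (φ.symm ((φ (i, w₀)).1, (φ (i, w₀)).2)).1 :=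
      hsymm _ _ _
    simpa using h1
  · intro j
    have h1 : (φ ((φ.symm (j, w₀)).1, w₀)).1 = (φ ((φ.symm (j, w₀)).1, (φ.symm (j, w₀)).2)).1 :=
      comp_const hH φ _ _ _
    simpa using h1
  · intro i
    refine ⟨⟨fun w => (φ (i, w)).2, fun w => (φ.symm ((φ (i, w₀)).1, w)).2, ?_, ?_⟩, ?_⟩
    · intro w
      show (φ.symm ((φ (i, w₀)).1, (φ (i, w)).2)).2 = w
      have h1 : ((φ (i, w₀)).1, (φ (i, w)).2) = φ (i, w) :=
        Prod.ext (comp_const hH φ i w₀ w) rfl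
      rw [h1]; simp
    · intro w
      have h2 : (φ.symm ((φ (i, w₀)).1, w)).1 = i := by
        have h3 : (φ.symm ((φ (i, w₀)).1, w)).1 = (φ.symm ((φ (i, w₀)).1, (φ (i, w₀)).2)).1 :=
          hsymm _ _ _
        simpa using h3
      show (φ ((i : Fin m), (φ.symm ((φ (i, w₀)).1, w)).2)).2 = w
      have h4 : ((i : Fin m), (φ.symm ((φ (i, w₀)).1, w)).2) = φ.symm ((φ (i, w₀)).1, w) :=
        Prod.ext h2.symm rfl
      rw [h4]; simp
    · intro u v
      show H.Adj (φ (i, u)).2 (φ (i, v)).2 ↔ H.Adj u v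
      constructor
      · intro h
        have : (copies H m).Adj (φ (i, u)) (φ (i, v)) := ⟨comp_const hH φ i u v, h⟩
        exact (φ.map_rel_iff.mp this).2
      · intro h
        exact (φ.map_rel_iff.mpr (⟨rfl, h⟩ : (copies H m).Adj (i, u) (i, v))).2
  · intro i w
    exact Prod.ext (comp_const hH φ i w w₀) rfl

private lemma hdist (_hH : H.Connected) {c : Fin m × W → Fin k}
    (hc : IsDistinguishing (copies H m) c) (i : Fin m) :
    IsDistinguishing H (fun w => c (i, w)) := by
  classical
  intro ψ hfix v
  set Ψ : Fin m → (H ≃g H) := fun j => if j = i then ψ else SimpleGraph.Iso.refl with hΨ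
  have hfix' : ∀ x, c (mkAuto (Equiv.refl _) Ψ x) = c x := by
    rintro ⟨j, w⟩
    by_cases hji : j = i
    · subst hji
      simp only [mkAuto_apply, Equiv.refl_apply, hΨ, if_pos rfl]
      exact hfix w
    · simp [hΨ, hji]
  have h := hc (mkAuto (Equiv.refl _) Ψ) hfix' (i, v)
  simp only [mkAuto_apply, Equiv.refl_apply, hΨ, if_pos rfl] at h
  exact congrArg Prod.snd h

private lemma class_ne (hH : H.Connected) {c : Fin m × W → Fin k}
    (hc : IsDistinguishing (copies H m) c) {i j : Fin m} (hij : i ≠ j)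
    (ψ : H ≃g H) (hψ : ∀ v, c (i, v) = c (j, ψ v)) : False := by
  classical
  obtain ⟨w₀⟩ := hH.nonempty
  set Ψ : Fin m → (H ≃g H) :=
    fun l => if l = i then ψ else if l = j then ψ.symm else SimpleGraph.Iso.refl with hΨ
  have hfix' : ∀ x, c (mkAuto (Equiv.swap i j) Ψ x) = c x := by
    rintro ⟨l, w⟩
    by_cases hli : l = i
    · subst hli
      simp only [mkAuto_apply, hΨ, if_pos rfl, Equiv.swap_apply_left]
      exact (hψ w).symm
    · by_cases hlj : l = j
      · subst hlj
        simp only [mkAuto_apply, hΨ, if_neg hli, if_pos rfl, Equiv.swap_apply_right]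
        have := hψ (ψ.symm w)
        simpa using this
      · simp [hΨ, hli, hlj, Equiv.swap_apply_of_ne_of_ne hli hlj]
  have h := hc (mkAuto (Equiv.swap i j) Ψ) hfix' (i, w₀)
  have h1 : Equiv.swap i j i = i := congrArg Prod.fst h
  rw [Equiv.swap_apply_left] at h1
  exact hij h1.symm

end Aux

/-- If `G` is the disjoint union of `m` copies of a connected graph `H`, then the number of
equivalence classes of distinguishing `k`-colorings of `G` equals `C(D(H; k), m)`. -/
theorem numDistClasses_copies {W : Type*} [Fintype W] (H : SimpleGraph W)
    (hH : H.Connected) (m k : ℕ) :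
    numDistClasses (copies H m) k = (numDistClasses H k).choose m := by
  classical
  obtain ⟨w₀⟩ := hH.nonempty
  set Q := Quotient (colorSetoid (α := Fin k) H (fun f => IsDistinguishing H f)) with hQdef
  letI : Fintype Q := Fintype.ofFinite Q
  set g : {c : Fin m × W → Fin k // IsDistinguishing (copies H m) c} → Finset Q :=
    fun c => Finset.univ.image
      (fun i : Fin m => (⟦⟨fun w => c.1 (i, w), hdist hH c.2 i⟩⟧ : Q)) with hg
  have hinj : ∀ c : {c : Fin m × W → Fin k // IsDistinguishing (copies H m) c},
      Function.Injective
        (fun i : Fin m => (⟦⟨fun w => c.1 (i, w), hdist hH c.2 i⟩⟧ : Q)) := by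
    intro c i j hEq
    by_contra hij
    obtain ⟨ψ, hψ⟩ := Quotient.exact hEq
    exact class_ne hH c.2 hij ψ hψ
  have hcard : ∀ c, (g c).card = m := fun c => by
    rw [hg, Finset.card_image_of_injective _ (hinj c), Finset.card_univ, Fintype.card_fin]
  have hresp : ∀ c c',
      (colorSetoid (copies H m) (fun c => IsDistinguishing (copies H m) c)).r c c' →
      g c = g c' := by
    rintro c c' ⟨Φ, hΦ⟩
    obtain ⟨σ, ψ, hσψ⟩ := decomp hH Φ
    have key : ∀ i : Fin m, (⟦⟨fun w => c.1 (i, w), hdist hH c.2 i⟩⟧ : Q)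
        = ⟦⟨fun w => c'.1 (σ i, w), hdist hH c'.2 (σ i)⟩⟧ := by
      intro i
      apply Quotient.sound
      refine ⟨ψ i, fun w => ?_⟩
      show c.1 (i, w) = c'.1 (σ i, ψ i w)
      rw [hΦ (i, w), hσψ]
    apply Finset.ext; intro q
    simp only [hg, Finset.mem_image, Finset.mem_univ, true_and]
    constructor
    · rintro ⟨i, rfl⟩; exact ⟨σ i, (key i).symm⟩
    · rintro ⟨j, rfl⟩
      refine ⟨σ.symm j, ?_⟩
      have h5 := key (σ.symm j)
      rw [Equiv.apply_symm_apply] at h5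
      exact h5
  set G2 : Quotient (colorSetoid (copies H m) (fun c => IsDistinguishing (copies H m) c)) →
      {s : Finset Q // s.card = m} :=
    Quotient.lift (fun c => (⟨g c, hcard c⟩ : {s : Finset Q // s.card = m}))
      (fun c c' h => Subtype.ext (hresp c c' h)) with hG2
  have hbij : Function.Bijective G2 := by
    constructor
    · intro x y
      induction x using Quotient.inductionOn with | _ c =>
      induction y using Quotient.inductionOn with | _ c' =>
      intro hxy
      have hgg : g c = g c' := congrArg Subtype.val hxy
      have hex : ∀ i : Fin m, ∃ j : Fin m,
          (⟦⟨fun w => c.1 (i, w), hdist hH c.2 i⟩⟧ : Q)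
            = ⟦⟨fun w => c'.1 (j, w), hdist hH c'.2 j⟩⟧ := by
        intro i
        have hmem : (⟦⟨fun w => c.1 (i, w), hdist hH c.2 i⟩⟧ : Q) ∈ g c' := by
          rw [← hgg, hg]
          exact Finset.mem_image_of_mem _ (Finset.mem_univ i)
        rw [hg] at hmem
        simp only [Finset.mem_image, Finset.mem_univ, true_and] at hmem
        obtain ⟨j, hj⟩ := hmem
        exact ⟨j, hj.symm⟩
      choose σ₀ hσ₀ using hex
      have hσinj : Function.Injective σ₀ := by
        intro i i' h
        by_contra hne
        have heq2 : (⟦⟨fun w => c.1 (i, w), hdist hH c.2 i⟩⟧ : Q)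
            = ⟦⟨fun w => c.1 (i', w), hdist hH c.2 i'⟩⟧ :=
          (hσ₀ i).trans (by rw [h]; exact (hσ₀ i').symm)
        exact hne (hinj c heq2)
      let σ : Equiv.Perm (Fin m) := Equiv.ofBijective σ₀ (Finite.injective_iff_bijective.mp hσinj)
      have hψex : ∀ i, ∃ ψ : H ≃g H, ∀ w, c.1 (i, w) = c'.1 (σ₀ i, ψ w) := by
        intro i
        obtain ⟨ψ, hψ⟩ := Quotient.exact (hσ₀ i)
        exact ⟨ψ, hψ⟩
      choose ψ hψ using hψex
      apply Quotient.sound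
      exact ⟨mkAuto σ ψ, by rintro ⟨i, w⟩; exact hψ i w⟩
    · rintro ⟨s, hs⟩
      let e := s.equivFin
      let q : Fin m → Q := fun i => (e.symm (Fin.cast hs.symm i) : Q)
      have hqinj : Function.Injective q := by
        intro i j h
        have h2 : (Fin.cast hs.symm i) = Fin.cast hs.symm j := e.symm.injective (Subtype.ext h)
        exact Fin.ext (by simpa using congrArg Fin.val h2)
      have hqmem : ∀ i, q i ∈ s := fun i => (e.symm _).2
      have hqsurj : ∀ x ∈ s, ∃ i, q i = x := by
        intro x hx
        refine ⟨Fin.cast hs (e ⟨x, hx⟩), ?_⟩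
        show (e.symm (Fin.cast hs.symm (Fin.cast hs (e ⟨x, hx⟩))) : Q) = x
        have h3 : Fin.cast hs.symm (Fin.cast hs (e ⟨x, hx⟩)) = e ⟨x, hx⟩ := rfl
        rw [h3, Equiv.symm_apply_apply]
      let f : Fin m → {f : W → Fin k // IsDistinguishing H f} := fun i => (q i).out
      have hf : ∀ i, (⟦f i⟧ : Q) = q i := fun i => Quotient.out_eq _
      let c : Fin m × W → Fin k := fun x => (f x.1).1 x.2
      have hcdist : IsDistinguishing (copies H m) c := by
        intro Φ hfix x
        obtain ⟨σ, ψ, hσψ⟩ := decomp hH Φ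
        have hfixed : ∀ i, σ i = i ∧ ∀ w, ψ i w = w := by
          intro i
          have hrel : (⟦f i⟧ : Q) = ⟦f (σ i)⟧ := by
            apply Quotient.sound
            refine ⟨ψ i, fun w => ?_⟩
            have h6 := hfix (i, w)
            rw [hσψ] at h6
            exact h6.symm
          have hσi : σ i = i := (hqinj (by rw [← hf, ← hf, hrel])).symm
          have hψall : ∀ v, (f i).1 (ψ i v) = (f i).1 v := by
            intro v
            have h7 := hfix (i, v)
            rw [hσψ i v, hσi] at h7
            exact h7
          exact ⟨hσi, (f i).2 (ψ i) hψall⟩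
        obtain ⟨i, w⟩ := x
        rw [hσψ i w, (hfixed i).1, (hfixed i).2 w]
      have key2 : ∀ i, (⟦⟨fun w => c (i, w), hdist hH hcdist i⟩⟧ : Q) = q i := by
        intro i
        rw [show (⟨fun w => c (i, w), hdist hH hcdist i⟩
            : {f : W → Fin k // IsDistinguishing H f}) = f i from Subtype.ext rfl, hf i]
      refine ⟨⟦⟨c, hcdist⟩⟧, ?_⟩
      apply Subtype.ext
      show g ⟨c, hcdist⟩ = s
      apply Finset.ext; intro x
      simp only [hg, Finset.mem_image, Finset.mem_univ, true_and]
      constructor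
      · rintro ⟨i, rfl⟩
        rw [key2 i]; exact hqmem i
      · intro hx
        obtain ⟨i, rfl⟩ := hqsurj x hx
        exact ⟨i, key2 i⟩
  have h1 : numDistClasses (copies H m) k = Nat.card {s : Finset Q // s.card = m} :=
    Nat.card_eq_of_bijective G2 hbij
  have h2 : numDistClasses H k = Fintype.card Q := by
    rw [show numDistClasses H k = Nat.card Q from rfl, Nat.card_eq_fintype_card]
  rw [h1, h2, Nat.card_eq_fintype_card, Fintype.card_finset_len]
end
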